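/- Let R be a semiring, i : M → N a normal monomorphism of R-modules, and L a saturated submodule of M. Then L is a saturated submodule of N (identifying M with i(M)), and the induced map i' : M/L → N/L, [x] ↦ [i(x)], is a well-defined normal monomorphism. -/
import Mathlib


/-- A submodule `N` of a module `M` over a semiring is *saturated* if
`x + y ∈ N` and `y ∈ N` imply `x ∈ N`. -/
def SaturatedSub {R M : Type*} [Semiring R] [AddCommMonoid M] [Module R M]
    (N : Submodule R M) : Prop :=
  ∀ x y : M, x + y ∈ N → y ∈ N → x ∈ N

variable {R M : Type*} [Semiring R] [AddCommMonoid M] [Module R M]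

/-- The congruence on `M` defined by a submodule `N`:
`x ~ y` iff `x + n = y + n'` for some `n, n' ∈ N`. -/
def quotCon (N : Submodule R M) : AddCon M where
  r x y := ∃ n ∈ N, ∃ n' ∈ N, x + n = y + n'
  iseqv := by
    constructor
    · intro x; exact ⟨0, N.zero_mem, 0, N.zero_mem, rfl⟩
    · rintro x y ⟨n, hn, n', hn', h⟩; exact ⟨n', hn', n, hn, h.symm⟩
    · rintro x y z ⟨n, hn, n', hn', h1⟩ ⟨m, hm, m', hm', h2⟩
      refine ⟨n + m, N.add_mem hn hm, m' + n', N.add_mem hm' hn', ?_⟩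
      calc x + (n + m) = x + n + m := (add_assoc _ _ _).symm
        _ = y + n' + m := by rw [h1]
        _ = y + m + n' := by rw [add_right_comm]
        _ = z + m' + n' := by rw [h2]
        _ = z + (m' + n') := add_assoc _ _ _
  add' := by
    rintro w x y z ⟨n, hn, n', hn', h1⟩ ⟨m, hm, m', hm', h2⟩
    refine ⟨n + m, N.add_mem hn hm, n' + m', N.add_mem hn' hm', ?_⟩
    calc w + y + (n + m) = (w + n) + (y + m) := by rw [add_add_add_comm]
      _ = (x + n') + (z + m') := by rw [h1, h2]
      _ = x + z + (n' + m') := by rw [add_add_add_comm]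

instance (N : Submodule R M) : SMul R (quotCon N).Quotient where
  smul r := Quotient.map' (fun m => r • m) (by
    rintro a b ⟨n, hn, n', hn', h⟩
    exact ⟨r • n, N.smul_mem r hn, r • n', N.smul_mem r hn', by
      rw [← smul_add, h, smul_add]⟩)

instance (N : Submodule R M) : Module R (quotCon N).Quotient where
  one_smul x := Quotient.inductionOn' x fun m => congrArg Quotient.mk'' (one_smul R m)
  mul_smul r s x := Quotient.inductionOn' x fun m => congrArg Quotient.mk'' (mul_smul r s m)
  smul_zero r := congrArg Quotient.mk'' (smul_zero (a := r) : r • (0 : M) = 0)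
  smul_add r x y := Quotient.inductionOn₂' x y fun m n => congrArg Quotient.mk'' (smul_add r m n)
  add_smul r s x := Quotient.inductionOn' x fun m => congrArg Quotient.mk'' (add_smul r s m)
  zero_smul x := Quotient.inductionOn' x fun m => congrArg Quotient.mk'' (zero_smul R m)

/-- The canonical projection `M → M/N` as a linear map. -/
def mkLinear (N : Submodule R M) : M →ₗ[R] (quotCon N).Quotient where
  toFun := Quotient.mk''
  map_add' _ _ := rfl
  map_smul' _ _ := by exact rfl

/-- Let `i : M → N` be a normal monomorphism of modules over a semiring `R`
(i.e. injective with saturated image) and `L` a saturated submodule of `M`.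
Then `i(L)` is a saturated submodule of `N`, and the induced map
`i' : M/L → N/i(L)`, `[x] ↦ [i x]`, is a well-defined normal monomorphism. -/
theorem stmt8 {R M N : Type*} [Semiring R] [AddCommMonoid M] [Module R M]
    [AddCommMonoid N] [Module R N]
    (i : M →ₗ[R] N) (hinj : Function.Injective i)
    (hsat : SaturatedSub (LinearMap.range i))
    (L : Submodule R M) (hL : SaturatedSub L) :
    SaturatedSub (L.map i) ∧
    ∃ i' : (quotCon L).Quotient →ₗ[R] (quotCon (L.map i)).Quotient,
      (∀ m : M, i' (Quotient.mk'' m) = Quotient.mk'' (i m)) ∧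
      Function.Injective i' ∧ SaturatedSub (LinearMap.range i') := by
  have hmapsat : SaturatedSub (L.map i) := by
    rintro x y hxy ⟨b, hb, rfl⟩
    obtain ⟨c, hc, hceq⟩ := hxy
    obtain ⟨a, rfl⟩ : x ∈ LinearMap.range i := by
      refine hsat x (i b) ⟨c, hceq⟩ ⟨b, rfl⟩
    have hab : a + b = c := hinj (by simpa [map_add] using hceq.symm)
    exact ⟨a, hL a b (hab ▸ hc) hb, rfl⟩
  refine ⟨hmapsat, ?_⟩
  let i' : (quotCon L).Quotient →ₗ[R] (quotCon (L.map i)).Quotient :=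
    { toFun := Quotient.map' i (by
        rintro a b ⟨n, hn, n', hn', h⟩
        exact ⟨i n, ⟨n, hn, rfl⟩, i n', ⟨n', hn', rfl⟩, by
          rw [← map_add, h, map_add]⟩),
      map_add' := fun x y => Quotient.inductionOn₂' x y fun m n =>
        congrArg Quotient.mk'' (map_add i m n),
      map_smul' := fun r x => Quotient.inductionOn' x fun m =>
        congrArg Quotient.mk'' (map_smul i r m) }
  refine ⟨i', fun m => rfl, ?_, ?_⟩
  · intro x y
    refine Quotient.inductionOn₂' x y fun a b h => ?_
    obtain ⟨p, ⟨u, hu, rfl⟩, p', ⟨v, hv, rfl⟩, heq⟩ := Quotient.exact' h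
    exact Quotient.sound' ⟨u, hu, v, hv, hinj (by simpa [map_add] using heq)⟩
  · intro x y hxy hy
    revert hxy hy
    refine Quotient.inductionOn₂' x y fun u v hxy hy => ?_
    obtain ⟨yq, hyq⟩ := hy
    obtain ⟨zq, hzq⟩ := hxy
    revert hyq hzq
    refine Quotient.inductionOn' yq fun ym => ?_
    refine Quotient.inductionOn' zq fun zm => ?_
    intro hyq hzq
    obtain ⟨p, ⟨a, _, rfl⟩, p', ⟨a', _, rfl⟩, h1⟩ :=
      Quotient.exact' (a := i ym) (b := v) hyq
    obtain ⟨q, ⟨c, _, rfl⟩, q', ⟨c', _, rfl⟩, h2⟩ :=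
      Quotient.exact' (a := i zm) (b := u + v) hzq
    have key : u + i (ym + (a + c')) = i (zm + (c + a')) := by
      simp only [map_add]
      calc u + (i ym + (i a + i c'))
          = (i ym + i a) + (u + i c') := by abel
        _ = (v + i a') + (u + i c') := by rw [h1]
        _ = (u + v + i c') + i a' := by abel
        _ = (i zm + i c) + i a' := by rw [← h2]
        _ = i zm + (i c + i a') := by abel
    obtain ⟨w, hw⟩ := hsat u (i (ym + (a + c'))) ⟨zm + (c + a'), key.symm⟩
      ⟨ym + (a + c'), rfl⟩
    exact ⟨Quotient.mk'' w, congrArg Quotient.mk'' hw⟩
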